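/- If H = Δ_p + V is a quasilinear Schrödinger operator associated to a graph b over (X,m) with potential V : X → ℝ, and u ∈ F_b(X) is H-harmonic, then |u| is H-subharmonic. -/

import Mathlib

open Real Filter

noncomputable section

attribute [local instance] Classical.propDecidable

/-- Signed power `a^⟨r⟩ = |a|^(r-1)·a`, with `0^⟨r⟩ = 0`. -/
def spow (r a : ℝ) : ℝ := if a = 0 then 0 else |a| ^ (r - 1) * a

/-- `b` is a (weighted, row-summable) graph over `X`. -/
def IsGraph {X : Type*} (b : X → X → ℝ) : Prop :=
  (∀ x y, 0 ≤ b x y) ∧ (∀ x y, b x y = b y x) ∧ (∀ x, b x x = 0) ∧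
    ∀ x, Summable fun y => b x y

/-- Connectedness: any two vertices are joined by a path of positive-weight edges. -/
def GraphConnected {X : Type*} (b : X → X → ℝ) : Prop :=
  ∀ x y, Relation.ReflTransGen (fun u v => 0 < b u v) x y

/-- Membership in `F_b(X)`. -/
def inF {X : Type*} (p : ℝ) (b : X → X → ℝ) (f : X → ℝ) : Prop :=
  ∀ x, Summable fun y => b x y * |f x - f y| ^ (p - 1)

/-- The weighted `p`-Laplacian. -/
def pLap {X : Type*} (p : ℝ) (b : X → X → ℝ) (m : X → ℝ) (f : X → ℝ) (x : X) : ℝ :=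
  (1 / m x) * ∑' y, b x y * spow (p - 1) (f x - f y)

/-- The quasilinear Schrödinger operator `H = Δ_p + V`. -/
def schrodOp {X : Type*} (p : ℝ) (b : X → X → ℝ) (m V : X → ℝ) (f : X → ℝ) (x : X) : ℝ :=
  pLap p b m f x + V x * spow (p - 1) (f x)

/-- The energy functional `Q_{p,b,m,V}`. -/
def pEnergy {X : Type*} (p : ℝ) (b : X → X → ℝ) (m V : X → ℝ) (φ : X → ℝ) : ℝ :=
  (1 / 2) * (∑' z : X × X, b z.1 z.2 * |φ z.1 - φ z.2| ^ p)
    + ∑' x, m x * V x * |φ x| ^ p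

/-- Positivity of `H`: existence of a positive `H`-superharmonic function. -/
def IsPositiveOp {X : Type*} (p : ℝ) (b : X → X → ℝ) (m V : X → ℝ) : Prop :=
  ∃ w : X → ℝ, inF p b w ∧ (∀ x, 0 ≤ w x) ∧ w ≠ 0 ∧ ∀ x, 0 ≤ schrodOp p b m V w x

/-- Subcriticality of the energy functional. -/
def pSubcritical {X : Type*} (p : ℝ) (b : X → X → ℝ) (m V : X → ℝ) : Prop :=
  ∃ W : X → ℝ, (∀ x, 0 ≤ W x) ∧ W ≠ 0 ∧
    ∀ φ : X → ℝ, (Function.support φ).Finite →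
      0 ≤ pEnergy p b m (fun x => V x - W x) φ

/-- Criticality: the energy functional is nonnegative but not subcritical. -/
def pCritical {X : Type*} (p : ℝ) (b : X → X → ℝ) (m V : X → ℝ) : Prop :=
  (∀ φ : X → ℝ, (Function.support φ).Finite → 0 ≤ pEnergy p b m V φ) ∧
    ¬ pSubcritical p b m V

/-- `v` is an Agmon ground state: strictly positive, harmonic, and every positive
superharmonic function is a positive multiple of it. -/
def IsAgmonGroundState {X : Type*} (p : ℝ) (b : X → X → ℝ) (m V : X → ℝ)
    (v : X → ℝ) : Prop :=
  (∀ x, 0 < v x) ∧ inF p b v ∧ (∀ x, schrodOp p b m V v x = 0) ∧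
    ∀ w : X → ℝ, inF p b w → (∀ x, 0 ≤ w x) → w ≠ 0 →
      (∀ x, 0 ≤ schrodOp p b m V w x) → ∃ c : ℝ, 0 < c ∧ ∀ x, w x = c * v x

/-- `G` is the minimal positive Green function of `Δ_p + α` with pole `o`. -/
def IsGreenFunction {X : Type*} (p : ℝ) (b : X → X → ℝ) (m : X → ℝ) (α : ℝ)
    (o : X) (G : X → ℝ) : Prop :=
  (∀ x, 0 < G x) ∧ inF p b G ∧
    (∀ x, schrodOp p b m (fun _ => α) G x = if x = o then 1 else 0) ∧
    ∀ φ : X → ℝ, inF p b φ → (∀ x, 0 < φ x) →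
      (∀ x, schrodOp p b m (fun _ => α) φ x = if x = o then 1 else 0) →
      ∀ x, G x ≤ φ x

/-- `u` is a positive solution of `H[u] = 0` of minimal growth at infinity. -/
def PositiveMinimalGrowth {X : Type*} (p : ℝ) (b : X → X → ℝ) (m V : X → ℝ)
    (u : X → ℝ) : Prop :=
  (∀ x, 0 < u x) ∧ inF p b u ∧
    ∃ K₀ : Set X, K₀.Finite ∧ (∀ x ∉ K₀, schrodOp p b m V u x = 0) ∧
      ∀ K : Set X, K.Finite → K₀ ⊆ K →
        ∀ v : X → ℝ, inF p b v → (∀ x, 0 < v x) →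
          (∀ x ∉ K, 0 ≤ schrodOp p b m V v x) → (∀ x ∈ K, u x ≤ v x) →
          ∀ x ∉ K, u x ≤ v x

/-- Combinatorial graph distance from `o` to `x`. -/
def gdist {X : Type*} (b : X → X → ℝ) (o x : X) : ℕ :=
  sInf {n : ℕ | ∃ w : ℕ → X, w 0 = o ∧ w n = x ∧ ∀ i < n, 0 < b (w i) (w (i + 1))}

/-- Total edge weight `∂_b B_k(o)` between the spheres of radii `k` and `k+1`. -/
def sphereBoundary {X : Type*} (b : X → X → ℝ) (o : X) (k : ℕ) : ℝ :=
  ∑' z : X × X, if gdist b o z.1 = k ∧ gdist b o z.2 = k + 1 then b z.1 z.2 else 0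

/-- Model graph: the inner and outer curvatures are spherically symmetric. -/
def IsModelGraph {X : Type*} (b : X → X → ℝ) (m : X → ℝ) (o : X) : Prop :=
  ∀ x y, gdist b o x = gdist b o y →
    ((1 / m x) * (∑' z, if gdist b o z = gdist b o x + 1 then b x z else 0)
        = (1 / m y) * (∑' z, if gdist b o z = gdist b o y + 1 then b y z else 0)) ∧
    ((1 / m x) * (∑' z, if gdist b o z + 1 = gdist b o x then b x z else 0)
        = (1 / m y) * (∑' z, if gdist b o z + 1 = gdist b o y then b y z else 0))

/-- The Green function of a subcritical model graph:
`G₀(x) = ∑_{k=|x|}^∞ (m(o)/∂_bB_k(o))^{1/(p-1)}`. -/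
def modelGreen {X : Type*} (p : ℝ) (b : X → X → ℝ) (m : X → ℝ) (o : X) (x : X) : ℝ :=
  ∑' k : ℕ, (m o / sphereBoundary b o (gdist b o x + k)) ^ (1 / (p - 1))

/-- The `d`-regular tree with standard weights, root `o` and distance function `ℓ`. -/
def IsRegularTree {X : Type*} (d : ℕ) (b : X → X → ℝ) (o : X) (ℓ : X → ℕ) : Prop :=
  (∀ x y, b x y = b y x) ∧ (∀ x, b x x = 0) ∧ (∀ x y, b x y = 0 ∨ b x y = 1) ∧
    ℓ o = 0 ∧
    (∀ x, {y | b x y = 1 ∧ ℓ y = ℓ x + 1}.ncard = d) ∧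
    (∀ x, x ≠ o → {y | b x y = 1 ∧ ℓ y + 1 = ℓ x}.ncard = 1) ∧
    (∀ x y, b x y = 1 → ℓ y = ℓ x + 1 ∨ ℓ x = ℓ y + 1)

/-- The simplified energy functional `E_u(φ)`. -/
def simpEnergy {X : Type*} (p : ℝ) (b : X → X → ℝ) (u φ : X → ℝ) : ℝ :=
  ∑' z : X × X,
    b z.1 z.2 * (u z.1 * u z.2) * |φ z.1 - φ z.2| ^ 2 *
      (|u z.1 - u z.2| * ((|φ z.1| + |φ z.2|) / 2)
        + (u z.1 * u z.2) ^ ((1 : ℝ) / 2) * |φ z.1 - φ z.2|) ^ (p - 2)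

lemma spow_zero' (r : ℝ) : spow r 0 = 0 := if_pos rfl

lemma spow_of_pos (r : ℝ) {a : ℝ} (ha : 0 < a) : spow r a = a ^ r := by
  rw [spow, if_neg ha.ne', abs_of_pos ha]
  rw [← Real.rpow_add_one ha.ne']
  congr 1; ring

lemma spow_neg' (r a : ℝ) : spow r (-a) = - spow r a := by
  rcases eq_or_ne a 0 with h | h
  · simp [h, spow]
  · rw [spow, spow, if_neg (neg_ne_zero.mpr h), if_neg h, abs_neg]; ring

lemma abs_spow (r : ℝ) (hr : r ≠ 0) (a : ℝ) : |spow r a| = |a| ^ r := by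
  rcases eq_or_ne a 0 with h | h
  · simp [h, spow, Real.zero_rpow hr]
  · rw [spow, if_neg h, abs_mul,
      abs_of_nonneg (Real.rpow_nonneg (abs_nonneg a) _), ← Real.rpow_add_one (abs_ne_zero.mpr h)]
    congr 1; ring

lemma spow_mono {r : ℝ} (hr : 0 < r) : Monotone (spow r) := by
  intro a c hac
  rcases lt_trichotomy a 0 with ha | ha | ha
  · have hA : spow r a = -(-a) ^ r := by
      rw [show a = -(-a) by ring, spow_neg', spow_of_pos r (by linarith : (0:ℝ) < -a)]
      ring_nf
    rcases lt_trichotomy c 0 with hc | hc | hc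
    · have hC : spow r c = -(-c) ^ r := by
        rw [show c = -(-c) by ring, spow_neg', spow_of_pos r (by linarith : (0:ℝ) < -c)]
        ring_nf
      rw [hA, hC, neg_le_neg_iff]
      exact Real.rpow_le_rpow (by linarith) (by linarith) hr.le
    · rw [hA, hc, spow_zero']
      exact neg_nonpos.mpr (Real.rpow_nonneg (by linarith) _)
    · rw [hA, spow_of_pos r hc]
      exact le_trans (neg_nonpos.mpr (Real.rpow_nonneg (by linarith) _))
        (Real.rpow_nonneg hc.le _)
  · subst ha
    rcases eq_or_lt_of_le hac with h | h
    · rw [← h]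
    · rw [spow_zero', spow_of_pos r h]
      exact Real.rpow_nonneg h.le _
  · have hc : 0 < c := lt_of_lt_of_le ha hac
    rw [spow_of_pos r ha, spow_of_pos r hc]
    exact Real.rpow_le_rpow ha.le hac hr.le

/-- the absolute value of an `H`-harmonic function is `H`-subharmonic. -/
theorem abs_subharmonic
    {X : Type} [Countable X] [Infinite X]
    (p : ℝ) (hp : 1 < p) (m : X → ℝ) (hm : ∀ x, 0 < m x)
    (b : X → X → ℝ) (hb : IsGraph b) (V : X → ℝ)
    (u : X → ℝ) (hu : inF p b u)
    (hharm : ∀ x, schrodOp p b m V u x = 0) :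
    inF p b (fun x => |u x|) ∧
      ∀ x, schrodOp p b m V (fun x => |u x|) x ≤ 0 := by
  have hr : (0:ℝ) < p - 1 := by linarith
  obtain ⟨hbnn, hbsymm, hbdiag, hbsum⟩ := hb
  have habs_le : ∀ x y : X,
      b x y * |(|u x| - |u y|)| ^ (p-1) ≤ b x y * |u x - u y| ^ (p-1) := fun x y =>
    mul_le_mul_of_nonneg_left
      (Real.rpow_le_rpow (abs_nonneg _) (abs_abs_sub_abs_le_abs_sub _ _) hr.le)
      (hbnn x y)
  have hFabs : inF p b (fun x => |u x|) := by
    intro x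
    exact Summable.of_nonneg_of_le
      (fun y => mul_nonneg (hbnn x y) (Real.rpow_nonneg (abs_nonneg _) _))
      (fun y => habs_le x y) (hu x)
  refine ⟨hFabs, fun x => ?_⟩
  have hm' : (0:ℝ) ≤ 1 / m x := div_nonneg zero_le_one (hm x).le
  have hsum1 : Summable (fun y => b x y * spow (p-1) (u x - u y)) := by
    refine Summable.of_norm_bounded (hu x) (fun y => ?_)
    rw [norm_mul, Real.norm_eq_abs, Real.norm_eq_abs, abs_of_nonneg (hbnn x y),
      abs_spow _ hr.ne']
  have hsum2 : Summable (fun y => b x y * spow (p-1) (u y - u x)) := by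
    refine Summable.of_norm_bounded (hu x) (fun y => ?_)
    rw [norm_mul, Real.norm_eq_abs, Real.norm_eq_abs, abs_of_nonneg (hbnn x y),
      abs_spow _ hr.ne', abs_sub_comm]
  have hsum3 : Summable (fun y => b x y * spow (p-1) (|u x| - |u y|)) := by
    refine Summable.of_norm_bounded (hu x) (fun y => ?_)
    rw [norm_mul, Real.norm_eq_abs, Real.norm_eq_abs, abs_of_nonneg (hbnn x y),
      abs_spow _ hr.ne']
    exact le_trans (le_of_eq rfl)
      (mul_le_mul_of_nonneg_left
        (Real.rpow_le_rpow (abs_nonneg _) (abs_abs_sub_abs_le_abs_sub _ _) hr.le)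
        (hbnn x y))
  have hh := hharm x
  simp only [schrodOp, pLap] at hh ⊢
  rcases lt_trichotomy (u x) 0 with hx | hx | hx
  · have key : ∀ y, b x y * spow (p-1) (|u x| - |u y|)
        ≤ b x y * spow (p-1) (u y - u x) := fun y =>
      mul_le_mul_of_nonneg_left
        (spow_mono hr (by
          have h1 := neg_abs_le (u y)
          rw [abs_of_neg hx]; linarith)) (hbnn x y)
    have h1 : (∑' y, b x y * spow (p-1) (|u x| - |u y|))
        ≤ ∑' y, b x y * spow (p-1) (u y - u x) := Summable.tsum_le_tsum key hsum3  hsum2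
    have h2 : (∑' y, b x y * spow (p-1) (u y - u x))
        = - ∑' y, b x y * spow (p-1) (u x - u y) := by
      rw [← tsum_neg]
      refine tsum_congr fun y => ?_
      rw [show u y - u x = -(u x - u y) by ring, spow_neg']; ring
    have habsx : spow (p-1) |u x| = - spow (p-1) (u x) := by
      rw [abs_of_neg hx, spow_neg']
    have h3 : (1 / m x) * (∑' y, b x y * spow (p-1) (|u x| - |u y|))
        ≤ (1 / m x) * (- ∑' y, b x y * spow (p-1) (u x - u y)) :=
      mul_le_mul_of_nonneg_left (h1.trans_eq h2) hm'
    rw [habsx, mul_neg] at *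
    linarith
  · have key : ∀ y, b x y * spow (p-1) (|u x| - |u y|) ≤ 0 := fun y => by
      refine mul_nonpos_of_nonneg_of_nonpos (hbnn x y) ?_
      have : spow (p-1) (|u x| - |u y|) ≤ spow (p-1) 0 :=
        spow_mono hr (by rw [hx, abs_zero]; simp [abs_nonneg])
      rwa [spow_zero'] at this
    have hts : (∑' y, b x y * spow (p-1) (|u x| - |u y|)) ≤ 0 := tsum_nonpos key
    have : spow (p-1) |u x| = 0 := by rw [hx, abs_zero, spow_zero']
    rw [this, mul_zero, add_zero]
    exact mul_nonpos_of_nonneg_of_nonpos hm' hts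
  · have key : ∀ y, b x y * spow (p-1) (|u x| - |u y|)
        ≤ b x y * spow (p-1) (u x - u y) := fun y =>
      mul_le_mul_of_nonneg_left
        (spow_mono hr (by
          have h1 := le_abs_self (u y)
          rw [abs_of_pos hx]; linarith)) (hbnn x y)
    have h1 : (∑' y, b x y * spow (p-1) (|u x| - |u y|))
        ≤ ∑' y, b x y * spow (p-1) (u x - u y) := Summable.tsum_le_tsum key hsum3  hsum1
    have habsx : spow (p-1) |u x| = spow (p-1) (u x) := by rw [abs_of_pos hx]
    have h3 : (1 / m x) * (∑' y, b x y * spow (p-1) (|u x| - |u y|))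
        ≤ (1 / m x) * (∑' y, b x y * spow (p-1) (u x - u y)) :=
      mul_le_mul_of_nonneg_left h1 hm'
    rw [habsx]
    linarith
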